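/- arXiv:2103.08171 — 3 statements merged into one kernel-verified Lean document; each statement's English description precedes it below -/
import Mathlib

section
/- Let Z be a Fréchet space over F (F = ℝ or ℂ), (M, 𝓜, μ) a σ-finite measure space, and ψ : M → Z' (the topological dual) such that for every z ∈ Z the function x ↦ ⟨ψ(x), z⟩ is in L¹(μ). Then for every E ∈ 𝓜 the map Λ_E : Z → F defined by Λ_E(z) = ∫_E ⟨ψ(x), z⟩ dμ(x) is a continuous linear functional, i.e. Λ_E ∈ Z'. -/
open MeasureTheory Filter Topology
open scoped ENNReal NNReal

/-- For a Fréchet space `Z` (complete, metrizable, locally convex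
topological vector space), a σ-finite measure space `(M, μ)`, and a Gelfand
μ-integrable `ψ : M → Z'` (i.e. `x ↦ ⟨ψ x, z⟩` is in `L¹(μ)` for every `z`),
the map `Λ_E : z ↦ ∫_E ⟨ψ x, z⟩ dμ` is a continuous linear functional on `Z`,
for every measurable set `E`. -/
theorem gelfand_integral_mem_dual
    (Z : Type*) [AddCommGroup Z] [Module ℝ Z] [UniformSpace Z] [IsUniformAddGroup Z]
    [ContinuousSMul ℝ Z] [LocallyConvexSpace ℝ Z] [TopologicalSpace.MetrizableSpace Z]
    [CompleteSpace Z]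
    (M : Type*) [MeasurableSpace M] (μ : Measure M) [SigmaFinite μ]
    (ψ : M → (Z →L[ℝ] ℝ))
    (hψ : ∀ z : Z, Integrable (fun x => ψ x z) μ)
    (E : Set M) (hE : MeasurableSet E) :
    ∃ Λ : Z →L[ℝ] ℝ, ∀ z : Z, Λ z = ∫ x in E, ψ x z ∂μ := by
  -- `Z` is a Baire space (completely metrizable), hence barrelled.
  haveI : (uniformity Z).IsCountablyGenerated := by
    rw [uniformity_eq_comap_nhds_zero Z]
    infer_instance
  -- The auxiliary seminorm `p z = ∫ |⟨ψ x, z⟩| dμ`.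
  set p : Seminorm ℝ Z := Seminorm.of (fun z => ∫ x, |ψ x z| ∂μ)
    (fun z w => by
      calc ∫ x, |ψ x (z + w)| ∂μ ≤ ∫ x, (|ψ x z| + |ψ x w|) ∂μ := by
            refine integral_mono (hψ (z + w)).abs ((hψ z).abs.add (hψ w).abs) fun x => ?_
            simpa [map_add] using abs_add_le (ψ x z) (ψ x w)
        _ = (∫ x, |ψ x z| ∂μ) + ∫ x, |ψ x w| ∂μ := integral_add (hψ z).abs (hψ w).abs)
    (fun a z => by
      simp only [_root_.map_smul, smul_eq_mul, abs_mul, Real.norm_eq_abs, integral_const_mul]) with hp_def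
  have hp_apply : ∀ z : Z, p z = ∫ x, |ψ x z| ∂μ := fun z => rfl
  -- `p` is lower semicontinuous (Fatou's lemma).
  have hlsc : LowerSemicontinuous fun z : Z => p z := by
    rw [lowerSemicontinuous_iff_isClosed_preimage]
    intro c
    refine IsSeqClosed.isClosed ?_
    intro u z hu hz
    simp only [Set.mem_preimage, Set.mem_Iic, hp_apply] at hu ⊢
    have hc : 0 ≤ c := le_trans (integral_nonneg fun x => abs_nonneg _) (hu 0)
    have key : ∫⁻ x, ‖ψ x z‖₊ ∂μ ≤ ENNReal.ofReal c := by
      have hpt : ∀ x, Tendsto (fun n => ((‖ψ x (u n)‖₊ : ℝ≥0∞))) atTop (𝓝 ((‖ψ x z‖₊ : ℝ≥0∞))) := by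
        intro x
        exact (ENNReal.continuous_coe.tendsto _).comp
          ((continuous_nnnorm.tendsto _).comp (((ψ x).continuous.tendsto z).comp hz))
      calc ∫⁻ x, ‖ψ x z‖₊ ∂μ
          = ∫⁻ x, liminf (fun n => ((‖ψ x (u n)‖₊ : ℝ≥0∞))) atTop ∂μ := by
            refine lintegral_congr fun x => ?_
            exact ((hpt x).liminf_eq).symm
        _ ≤ liminf (fun n => ∫⁻ x, ‖ψ x (u n)‖₊ ∂μ) atTop :=
            lintegral_liminf_le' fun n => (hψ (u n)).aestronglyMeasurable.enorm
        _ ≤ ENNReal.ofReal c := by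
            have hb : ∀ n, ∫⁻ x, ‖ψ x (u n)‖₊ ∂μ ≤ ENNReal.ofReal c := fun n => by
              show ∫⁻ x, ‖ψ x (u n)‖ₑ ∂μ ≤ _
              rw [← ofReal_integral_norm_eq_lintegral_enorm (hψ (u n))]
              exact ENNReal.ofReal_le_ofReal (by simpa [Real.norm_eq_abs] using hu n)
            calc liminf (fun n => ∫⁻ x, ‖ψ x (u n)‖₊ ∂μ) atTop
                ≤ liminf (fun _ : ℕ => ENNReal.ofReal c) atTop :=
                  Filter.liminf_le_liminf (Eventually.of_forall hb)
              _ = ENNReal.ofReal c := Filter.liminf_const _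
    have := integral_norm_eq_lintegral_enorm (hψ z).aestronglyMeasurable
    simp only [Real.norm_eq_abs] at this
    rw [this]
    exact ENNReal.toReal_le_of_le_ofReal hc key
  -- Barrelledness: `p` is continuous.
  have hpc : Continuous fun z : Z => p z := p.continuous_of_lowerSemicontinuous hlsc
  -- The linear functional `Λ`.
  set L : Z →ₗ[ℝ] ℝ :=
    { toFun := fun z => ∫ x in E, ψ x z ∂μ
      map_add' := fun z w => by
        simp only [map_add]
        exact integral_add (hψ z).integrableOn (hψ w).integrableOn
      map_smul' := fun a z => by
        simp only [_root_.map_smul, smul_eq_mul, integral_const_mul, RingHom.id_apply] } with hL_def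
  have hbound : ∀ z : Z, ‖L z‖ ≤ p z := by
    intro z
    calc ‖∫ x in E, ψ x z ∂μ‖ ≤ ∫ x in E, ‖ψ x z‖ ∂μ := norm_integral_le_integral_norm _
      _ ≤ ∫ x, ‖ψ x z‖ ∂μ :=
          setIntegral_le_integral (hψ z).norm (Eventually.of_forall fun x => norm_nonneg _)
      _ = p z := by simp [hp_apply, Real.norm_eq_abs]
  have hcont : Continuous L := by
    refine continuous_of_continuousAt_zero L ?_
    have h0 : Tendsto (fun z : Z => p z) (𝓝 0) (𝓝 0) := by
      have := hpc.tendsto 0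
      rwa [map_zero] at this
    have : Tendsto L (𝓝 0) (𝓝 0) := squeeze_zero_norm hbound h0
    simpa [ContinuousAt, map_zero] using this
  exact ⟨⟨L, hcont⟩, fun z => rfl⟩
end

section
/- Vitali convergence theorem for Gelfand integrals: Let Z be a Fréchet space, (M, 𝓜, μ) a σ-finite measure space, ψ_k : M → Z' Gelfand μ-integrable for each k, and ψ : M → Z' with ⟨ψ(·), z⟩ μ-measurable for each z ∈ Z. Suppose (i) for μ-a.e. x, ψ_k(x) → ψ(x) in σ(Z', Z); (ii) for each z and ε > 0 there is E_{ε,z} of finite measure with sup_k ∫_G |⟨ψ_k, z⟩| dμ < ε for all measurable G disjoint from E_{ε,z}; (iii) for each z and ε > 0 there is δ > 0 with sup_k ∫_E |⟨ψ_k, z⟩| dμ < ε whenever μ(E) < δ. Then ψ is Gelfand μ-integrable and ∫_M ψ_k dμ → ∫_M ψ dμ in the weak-star topology σ(Z', Z). -/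
open MeasureTheory Filter Topology Set ENNReal NNReal

private lemma indicator_eLpNorm_eq {M : Type*} [MeasurableSpace M] {μ : Measure M}
    {h : M → ℝ} (hint : Integrable h μ) {s : Set M} (hs : MeasurableSet s) :
    eLpNorm (s.indicator h) 1 μ = ENNReal.ofReal (∫ x in s, |h x| ∂μ) := by
  rw [eLpNorm_one_eq_lintegral_enorm]
  simp_rw [enorm_eq_nnnorm]
  have h1 : ∀ x, (‖s.indicator h x‖₊ : ℝ≥0∞) =
      s.indicator (fun x => (‖h x‖₊ : ℝ≥0∞)) x := by
    intro x; by_cases hx : x ∈ s <;> simp [hx]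
  rw [lintegral_congr h1, lintegral_indicator hs]
  simp_rw [← enorm_eq_nnnorm]
  rw [← ofReal_integral_norm_eq_lintegral_enorm hint.restrict]
  simp [Real.norm_eq_abs]

private lemma vitali_real {M : Type*} [MeasurableSpace M] (μ : Measure M)
    (f : ℕ → M → ℝ) (g : M → ℝ)
    (hfint : ∀ n, Integrable (f n) μ)
    (hgmeas : AEMeasurable g μ)
    (hconv : ∀ᵐ x ∂μ, Tendsto (fun n => f n x) atTop (𝓝 (g x)))
    (htight : ∀ ε > (0:ℝ), ∃ E, MeasurableSet E ∧ μ E < ⊤ ∧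
      ∀ G, MeasurableSet G → G ∩ E = ∅ → ∀ k, ∫ x in G, |f k x| ∂μ < ε)
    (hAC : ∀ ε > (0:ℝ), ∃ δ > (0:ℝ), ∀ E, MeasurableSet E → μ E < ENNReal.ofReal δ →
      ∀ k, ∫ x in E, |f k x| ∂μ < ε) :
    Integrable g μ ∧ Tendsto (fun n => ∫ x, f n x ∂μ) atTop (𝓝 (∫ x, g x ∂μ)) := by
  have hfm : ∀ n, AEStronglyMeasurable (f n) μ := fun n => (hfint n).1
  -- uniform integrability
  have hui : UnifIntegrable f 1 μ := by
    intro ε hε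
    obtain ⟨δ, hδ, hδ'⟩ := hAC ε hε
    refine ⟨δ/2, by positivity, fun i s hs hμs => ?_⟩
    rw [indicator_eLpNorm_eq (hfint i) hs]
    refine ENNReal.ofReal_le_ofReal (hδ' s hs (lt_of_le_of_lt hμs ?_) i).le
    exact (ENNReal.ofReal_lt_ofReal_iff hδ).mpr (by linarith)
  -- uniform tightness
  have hut : UnifTight f 1 μ := by
    intro ε hε
    obtain ⟨E, hE, hEfin, hEb⟩ := htight ε (by exact_mod_cast hε)
    refine ⟨E, hEfin.ne, fun i => ?_⟩
    rw [indicator_eLpNorm_eq (hfint i) hE.compl]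
    calc ENNReal.ofReal (∫ x in Eᶜ, |f i x| ∂μ)
        ≤ ENNReal.ofReal (ε : ℝ) :=
          ENNReal.ofReal_le_ofReal (hEb Eᶜ hE.compl (compl_inter_self E) i).le
      _ = (ε : ℝ≥0∞) := ENNReal.ofReal_coe_nnreal
  -- key liminf bound
  have key : ∀ s : Set M, MeasurableSet s → (∀ k, ∫ x in s, |f k x| ∂μ < 1) →
      ∫⁻ x in s, ‖g x‖₊ ∂μ ≤ 1 := by
    intro s hs hb
    have hae : ∀ᵐ x ∂μ.restrict s,
        (‖g x‖₊ : ℝ≥0∞) = liminf (fun n => (‖f n x‖₊ : ℝ≥0∞)) atTop := by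
      filter_upwards [ae_restrict_of_ae hconv] with x hx
      exact ((ENNReal.tendsto_coe.mpr hx.nnnorm).liminf_eq).symm
    calc ∫⁻ x in s, ‖g x‖₊ ∂μ
        = ∫⁻ x in s, liminf (fun n => (‖f n x‖₊ : ℝ≥0∞)) atTop ∂μ :=
          lintegral_congr_ae hae
      _ ≤ liminf (fun n => ∫⁻ x in s, ‖f n x‖₊ ∂μ) atTop :=
          lintegral_liminf_le' (fun n => (hfm n).restrict.enorm)
      _ ≤ 1 := by
          refine liminf_le_of_frequently_le (Frequently.of_forall fun n => ?_)
          simp_rw [← enorm_eq_nnnorm]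
          rw [← ofReal_integral_norm_eq_lintegral_enorm (hfint n).restrict]
          calc ENNReal.ofReal (∫ x in s, ‖f n x‖ ∂μ)
              ≤ ENNReal.ofReal 1 := by
                refine ENNReal.ofReal_le_ofReal ?_
                simpa [Real.norm_eq_abs] using (hb n).le
            _ = 1 := ENNReal.ofReal_one
  -- measurable representatives
  set f' : ℕ → M → ℝ := fun n => (hfm n).mk (f n) with hf'def
  have hf'sm : ∀ n, StronglyMeasurable (f' n) := fun n => (hfm n).stronglyMeasurable_mk
  have hf'eq : ∀ n, f n =ᵐ[μ] f' n := fun n => (hfm n).ae_eq_mk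
  have hgm : AEStronglyMeasurable g μ := hgmeas.aestronglyMeasurable
  set g' : M → ℝ := hgm.mk g with hg'def
  have hg'sm : StronglyMeasurable g' := hgm.stronglyMeasurable_mk
  have hg'eq : g =ᵐ[μ] g' := hgm.ae_eq_mk
  have hconv' : ∀ᵐ x ∂μ, Tendsto (fun n => f' n x) atTop (𝓝 (g' x)) := by
    filter_upwards [hconv, ae_all_iff.mpr hf'eq, hg'eq] with x h1 h2 h3
    rw [← h3]; exact h1.congr h2
  -- tightness and AC for ε = 1
  obtain ⟨E, hE, hEfin, hEb⟩ := htight 1 one_pos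
  obtain ⟨δ, hδ, hδ'⟩ := hAC 1 one_pos
  -- Egorov on E
  obtain ⟨t, hts, htm, htμ, hunif⟩ := tendstoUniformlyOn_of_ae_tendsto hf'sm hg'sm hE hEfin.ne
    (by filter_upwards [hconv'] with x h _ using h) (half_pos hδ)
  -- bound on E \ t via uniform convergence
  obtain ⟨N, hN⟩ := (Metric.tendstoUniformlyOn_iff.mp hunif 1 one_pos).exists
  have hCb : ∀ x ∈ E \ t, (‖g' x‖₊ : ℝ≥0∞) ≤ (‖f' N x‖₊ : ℝ≥0∞) + 1 := by
    intro x hx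
    have h1 : dist (g' x) (f' N x) < 1 := hN x hx
    have h2 : ‖g' x‖₊ ≤ ‖f' N x‖₊ + 1 := by
      rw [← NNReal.coe_le_coe]
      push_cast
      have := norm_le_norm_add_norm_sub' (g' x) (f' N x)
      rw [Real.dist_eq] at h1
      have : ‖g' x‖ ≤ ‖f' N x‖ + ‖g' x - f' N x‖ := norm_le_insert' _ _
      rw [Real.norm_eq_abs (g' x - f' N x)] at this
      calc (‖g' x‖₊ : ℝ) = ‖g' x‖ := rfl
        _ ≤ ‖f' N x‖ + |g' x - f' N x| := this
        _ ≤ ‖f' N x‖ + 1 := by linarith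
    exact_mod_cast h2
  have hC : ∫⁻ x in E \ t, ‖g x‖₊ ∂μ < ⊤ := by
    have hcongr : ∫⁻ x in E \ t, ‖g x‖₊ ∂μ = ∫⁻ x in E \ t, ‖g' x‖₊ ∂μ := by
      refine lintegral_congr_ae ?_
      filter_upwards [ae_restrict_of_ae hg'eq] with x hx
      rw [hx]
    rw [hcongr]
    calc ∫⁻ x in E \ t, (‖g' x‖₊ : ℝ≥0∞) ∂μ
        ≤ ∫⁻ x in E \ t, ((‖f' N x‖₊ : ℝ≥0∞) + 1) ∂μ := by
          refine lintegral_mono_ae ?_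
          filter_upwards [ae_restrict_mem (hE.diff htm)] with x hx using hCb x hx
      _ = (∫⁻ x in E \ t, (‖f' N x‖₊ : ℝ≥0∞) ∂μ) + μ (E \ t) := by
          rw [lintegral_add_right _ measurable_const, setLIntegral_const, one_mul]
      _ ≤ (∫⁻ x, (‖f' N x‖₊ : ℝ≥0∞) ∂μ) + μ E := by
          gcongr
          · exact Measure.restrict_le_self
          · exact diff_subset
      _ < ⊤ := by
          refine ENNReal.add_lt_top.mpr ⟨?_, hEfin⟩
          exact ((hfint N).congr (hf'eq N)).2
  -- assemble integrability
  have hA : ∫⁻ x in Eᶜ, ‖g x‖₊ ∂μ ≤ 1 :=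
    key Eᶜ hE.compl (fun k => hEb Eᶜ hE.compl (compl_inter_self E) k)
  have hB : ∫⁻ x in t, ‖g x‖₊ ∂μ ≤ 1 := by
    refine key t htm (fun k => hδ' t htm (lt_of_le_of_lt htμ ?_) k)
    exact (ENNReal.ofReal_lt_ofReal_iff hδ).mpr (by linarith)
  have hgint : Integrable g μ := by
    refine ⟨hgm, ?_⟩
    rw [HasFiniteIntegral]
    simp_rw [enorm_eq_nnnorm]
    rw [← lintegral_add_compl (fun x => (‖g x‖₊ : ℝ≥0∞)) hE]
    have hEsplit : ∫⁻ x in E, ‖g x‖₊ ∂μ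
        = (∫⁻ x in E \ t, ‖g x‖₊ ∂μ) + ∫⁻ x in t, ‖g x‖₊ ∂μ := by
      rw [← lintegral_union htm disjoint_sdiff_self_left, diff_union_of_subset hts]
    rw [hEsplit]
    exact ENNReal.add_lt_top.mpr ⟨ENNReal.add_lt_top.mpr ⟨hC, lt_of_le_of_lt hB one_lt_top⟩,
      lt_of_le_of_lt hA one_lt_top⟩
  -- conclude with Vitali (Mathlib)
  have hLp := tendsto_Lp_of_tendsto_ae (μ := μ) (p := 1) le_rfl ENNReal.one_ne_top hfm
    (memLp_one_iff_integrable.mpr hgint) hui hut hconv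
  refine ⟨hgint, tendsto_integral_of_L1 g hgint.1 (Eventually.of_forall hfint) ?_⟩
  have : ∀ n, eLpNorm (f n - g) 1 μ = ∫⁻ x, ‖f n x - g x‖ₑ ∂μ := by
    intro n; rw [eLpNorm_one_eq_lintegral_enorm]; rfl
  simpa [this] using hLp

/-- Vitali convergence theorem for Gelfand integrals. Under
(i) a.e. weak-star convergence `ψ_k(x) → ψ(x)`, (ii) uniform tightness and
(iii) uniform absolute continuity of the integrals of `|⟨ψ_k, z⟩|`, the limit
`ψ` is Gelfand μ-integrable and `∫_M ψ_k dμ → ∫_M ψ dμ` weak-star. -/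
theorem gelfand_integral_vitali
    (Z : Type*) [AddCommGroup Z] [Module ℝ Z] [UniformSpace Z] [IsUniformAddGroup Z]
    [ContinuousSMul ℝ Z] [LocallyConvexSpace ℝ Z] [TopologicalSpace.MetrizableSpace Z]
    [CompleteSpace Z]
    (M : Type*) [MeasurableSpace M] (μ : Measure M) [SigmaFinite μ]
    (ψk : ℕ → M → (Z →L[ℝ] ℝ)) (ψ : M → (Z →L[ℝ] ℝ))
    (hψk : ∀ k, ∀ z : Z, Integrable (fun x => ψk k x z) μ)
    (hmeas : ∀ z : Z, AEMeasurable (fun x => ψ x z) μ)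
    (hconv : ∀ᵐ x ∂μ, ∀ z : Z, Tendsto (fun k => ψk k x z) atTop (𝓝 (ψ x z)))
    (htight : ∀ z : Z, ∀ ε > (0 : ℝ), ∃ E : Set M, MeasurableSet E ∧ μ E < ⊤ ∧
      ∀ G : Set M, MeasurableSet G → G ∩ E = ∅ →
        ∀ k, ∫ x in G, |ψk k x z| ∂μ < ε)
    (hunifAC : ∀ z : Z, ∀ ε > (0 : ℝ), ∃ δ > (0 : ℝ),
      ∀ E : Set M, MeasurableSet E → μ E < ENNReal.ofReal δ →
        ∀ k, ∫ x in E, |ψk k x z| ∂μ < ε) :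
    (∀ z : Z, Integrable (fun x => ψ x z) μ) ∧
    (∀ z : Z, Tendsto (fun k => ∫ x, ψk k x z ∂μ) atTop (𝓝 (∫ x, ψ x z ∂μ))) := by
  have main : ∀ z : Z, Integrable (fun x => ψ x z) μ ∧
      Tendsto (fun k => ∫ x, ψk k x z ∂μ) atTop (𝓝 (∫ x, ψ x z ∂μ)) := by
    intro z
    exact vitali_real μ (fun k x => ψk k x z) (fun x => ψ x z)
      (fun k => hψk k z) (hmeas z)
      (by filter_upwards [hconv] with x hx using hx z)
      (htight z) (hunifAC z)
  exact ⟨fun z => (main z).1, fun z => (main z).2⟩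
end

section
/- Dominated convergence theorem for Gelfand integrals: Let Z be a Fréchet space, (M, 𝓜, μ) σ-finite, and ψ_k, ψ : M → Z' such that ⟨ψ_k(·), z⟩ and ⟨ψ(·), z⟩ are μ-measurable for each z ∈ Z, ψ_k(x) → ψ(x) weakly-star for μ-a.e. x, and for each z ∈ Z there exists 0 ≤ g^z ∈ L¹(μ) with |⟨ψ_k(x), z⟩| ≤ g^z(x) for μ-a.e. x and all k. Then ψ is Gelfand μ-integrable and ∫_M ψ_k dμ → ∫_M ψ dμ in σ(Z', Z). -/
open MeasureTheory Filter Topology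

/-- Dominated convergence theorem for Gelfand integrals: if the
pairings are measurable, `ψ_k(x) → ψ(x)` weak-star for a.e. `x`, and for each
`z` there is `0 ≤ g^z ∈ L¹(μ)` dominating `|⟨ψ_k(x), z⟩|` a.e. for all `k`,
then `ψ` is Gelfand μ-integrable and `∫ ψ_k dμ → ∫ ψ dμ` weak-star. -/
theorem gelfand_integral_dominated_convergence
    (Z : Type*) [AddCommGroup Z] [Module ℝ Z] [UniformSpace Z] [IsUniformAddGroup Z]
    [ContinuousSMul ℝ Z] [LocallyConvexSpace ℝ Z] [TopologicalSpace.MetrizableSpace Z]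
    [CompleteSpace Z]
    (M : Type*) [MeasurableSpace M] (μ : Measure M) [SigmaFinite μ]
    (ψk : ℕ → M → (Z →L[ℝ] ℝ)) (ψ : M → (Z →L[ℝ] ℝ))
    (hmeask : ∀ k, ∀ z : Z, AEMeasurable (fun x => ψk k x z) μ)
    (hmeas : ∀ z : Z, AEMeasurable (fun x => ψ x z) μ)
    (hconv : ∀ᵐ x ∂μ, ∀ z : Z, Tendsto (fun k => ψk k x z) atTop (𝓝 (ψ x z)))
    (hdom : ∀ z : Z, ∃ g : M → ℝ, (∀ x, 0 ≤ g x) ∧ Integrable g μ ∧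
      ∀ k, ∀ᵐ x ∂μ, |ψk k x z| ≤ g x) :
    (∀ z : Z, Integrable (fun x => ψ x z) μ) ∧
    (∀ z : Z, Tendsto (fun k => ∫ x, ψk k x z ∂μ) atTop (𝓝 (∫ x, ψ x z ∂μ))) := by
  have key : ∀ z : Z, Integrable (fun x => ψ x z) μ ∧
      Tendsto (fun k => ∫ x, ψk k x z ∂μ) atTop (𝓝 (∫ x, ψ x z ∂μ)) := by
    intro z
    obtain ⟨g, hg0, hgint, hgdom⟩ := hdom z
    have hconv' : ∀ᵐ x ∂μ, Tendsto (fun k => ψk k x z) atTop (𝓝 (ψ x z)) :=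
      hconv.mono fun x hx => hx z
    have hbound : ∀ k, ∀ᵐ x ∂μ, ‖ψk k x z‖ ≤ g x := by
      intro k; simpa [Real.norm_eq_abs] using hgdom k
    have hlim : ∀ᵐ x ∂μ, ‖ψ x z‖ ≤ g x := by
      filter_upwards [hconv', ae_all_iff.2 hbound] with x hx hb
      exact le_of_tendsto' (hx.norm) hb
    have hint : Integrable (fun x => ψ x z) μ :=
      Integrable.mono' hgint ((hmeas z).aestronglyMeasurable) hlim
    refine ⟨hint, ?_⟩
    exact tendsto_integral_of_dominated_convergence g
      (fun k => (hmeask k z).aestronglyMeasurable) hgint hbound hconv'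
  exact ⟨fun z => (key z).1, fun z => (key z).2⟩
end
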